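/- Let (R,𝔪) be a commutative noetherian local ring with depth R = 0, and M a finitely generated R-module with depth_R M = 0 such that Z(End_R(M)) is free as an R-module. Then Z(End_R(M)) ≅ R as R-modules. -/

import Mathlib

set_option synthInstance.maxHeartbeats 400000
set_option maxHeartbeats 1000000

open CategoryTheory
open Limits IsLocalRing

section Aux
noncomputable instance linYonPresLim {R : Type} [CommRing R] (Y : ModuleCat R) (J : Type)
    [SmallCategory J] :
    PreservesLimitsOfShape J ((linearYoneda R (ModuleCat R)).obj Y) := by
  have : PreservesLimitsOfShape J (((linearYoneda R (ModuleCat R)).obj Y) ⋙ forget (ModuleCat R)) :=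
    (inferInstance : PreservesLimitsOfShape J (yoneda.obj Y))
  exact preservesLimitsOfShape_of_reflects_of_preserves _ (forget (ModuleCat R))

noncomputable instance linYonPresFC {R : Type} [CommRing R] (Y : ModuleCat R) :
    PreservesFiniteColimits ((linearYoneda R (ModuleCat R)).obj Y).rightOp :=
  ⟨fun J _ _ => preservesColimitsOfShape_rightOp J _⟩

lemma nontrivial_hom_of_ext0 {R : Type} [CommRing R] (X Y : ModuleCat R)
    (h : Nontrivial (((Ext R (ModuleCat R) 0).obj (Opposite.op X)).obj Y)) :
    Nontrivial (X →ₗ[R] Y) := by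
  set F := ((linearYoneda R (ModuleCat R)).obj Y).rightOp
  have e : ((F.leftDerived 0).obj X) ≅ F.obj X := F.leftDerivedZeroIsoSelf.app X
  have e2 : Opposite.unop (F.obj X) ≅ Opposite.unop ((F.leftDerived 0).obj X) := e.unop
  have : Nontrivial (Opposite.unop ((F.leftDerived 0).obj X) : ModuleCat R) := h
  have e3 := ((forget (ModuleCat R)).mapIso e2).toEquiv
  exact (((ModuleCat.homEquiv (M := X) (N := Y)).symm.trans (e3 : (X ⟶ Y) ≃ _))).nontrivial

/-- scalar action of central endomorphisms on the socle -/
lemma central_scalar {R : Type} [CommRing R] [IsLocalRing R] {M : Type} [AddCommGroup M]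
    [Module R M] [Module.Finite R M] (hMnt : Nontrivial M)
    (φ : Module.End R M) (hφ : ∀ ψ : Module.End R M, ψ * φ = φ * ψ) :
    ∃ c : R, ∀ w : M, (∀ a ∈ maximalIdeal R, a • w = 0) → φ w = c • w := by
  classical
  set I := maximalIdeal R with hI
  set p : Submodule R M := I • ⊤ with hpdef
  have hp : p ≠ ⊤ := by
    refine fun h => Submodule.top_ne_ideal_smul_of_le_jacobson_annihilator (I := I) (M := M)
      ?_ h.symm
    refine le_trans ?_ (Ideal.jacobson_mono bot_le)
    rw [IsLocalRing.jacobson_eq_maximalIdeal ⊥ bot_ne_top]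
  obtain ⟨v₀, hv₀⟩ : ∃ v₀ : M, v₀ ∉ p := by
    by_contra h
    push_neg at h
    exact hp (Submodule.eq_top_iff'.mpr h)
  letI K := R ⧸ I
  letI : Field K := Ideal.Quotient.field I
  let V := M ⧸ p
  let v₁ : V := Submodule.Quotient.mk v₀
  have hv₁ : v₁ ≠ 0 := by
    intro h
    exact hv₀ ((Submodule.Quotient.mk_eq_zero p).mp h)
  let f : K →ₗ[K] V := LinearMap.toSpanSingleton K V v₁
  have hker : LinearMap.ker f = ⊥ := LinearMap.ker_toSpanSingleton K hv₁
  obtain ⟨g, hg⟩ := f.exists_leftInverse_of_injective hker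
  let ξ : M →ₗ[R] K := (g.restrictScalars R).comp p.mkQ
  have hξv₀ : ξ v₀ = 1 := by
    have h1 : g (f 1) = 1 := by
      have := congrArg (fun h => h (1 : K)) (congrArg DFunLike.coe hg)
      simpa using this
    have h2 : f 1 = v₁ := by simp [f]
    rw [h2] at h1
    exact h1
  obtain ⟨c, hc⟩ := Ideal.Quotient.mk_surjective (I := I) (ξ (φ v₀))
  refine ⟨c, fun w hw => ?_⟩
  have hker' : (I : Submodule R R) ≤ LinearMap.ker (LinearMap.toSpanSingleton R M w) := by
    intro a ha
    simpa [LinearMap.toSpanSingleton_apply] using hw a ha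
  let ℓ : K →ₗ[R] M := Submodule.liftQ I (LinearMap.toSpanSingleton R M w) hker'
  let ψ : Module.End R M := ℓ.comp ξ
  have hcomm := hφ ψ
  have h1 : (φ * ψ) v₀ = φ w := by
    have : ψ v₀ = w := by
      show ℓ (ξ v₀) = w
      rw [hξv₀]
      have : (1 : K) = Submodule.Quotient.mk (1 : R) := rfl
      rw [this, Submodule.liftQ_apply]
      simp [LinearMap.toSpanSingleton_apply]
    simp [Module.End.mul_apply, this]
  have h2 : (ψ * φ) v₀ = c • w := by
    show ℓ (ξ (φ v₀)) = c • w
    rw [← hc]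
    have : (Ideal.Quotient.mk I c : K) = Submodule.Quotient.mk c := rfl
    rw [this, Submodule.liftQ_apply]
    simp [LinearMap.toSpanSingleton_apply]
  rw [← h1, ← hcomm, h2]
end Aux



/-- The depth of a module `M` over a noetherian local ring `A`:
`inf { n | Ext^n_A(A/𝔪, M) ≠ 0 }`, with the convention that the depth of the
zero module is `∞` (the infimum of the empty set). -/
noncomputable def moduleDepth (A : Type) [CommRing A] [IsLocalRing A]
    (M : Type) [AddCommGroup M] [Module A M] : ℕ∞ :=
  sInf {d : ℕ∞ | ∃ n : ℕ, d = n ∧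
    Nontrivial (((Ext A (ModuleCat A) n).obj
      (Opposite.op (ModuleCat.of A (IsLocalRing.ResidueField A)))).obj (ModuleCat.of A M))}


lemma exists_socle {R : Type} [CommRing R] [IsLocalRing R] {M : Type} [AddCommGroup M] [Module R M]
    (h : moduleDepth R M = 0) : ∃ m : M, m ≠ 0 ∧ ∀ a ∈ maximalIdeal R, a • m = 0 := by
  have h0 : (0 : ℕ∞) ∈ {d : ℕ∞ | ∃ n : ℕ, d = n ∧
      Nontrivial (((Ext R (ModuleCat R) n).obj
        (Opposite.op (ModuleCat.of R (ResidueField R)))).obj (ModuleCat.of R M))} := by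
    by_contra h'
    have h1 : 1 ≤ moduleDepth R M := by
      apply le_sInf
      rintro d ⟨n, rfl, hn⟩
      rcases Nat.eq_zero_or_pos n with hn0 | hn0
      · exact absurd ⟨n, by simp [hn0], hn⟩ h'
      · exact_mod_cast hn0
    rw [h] at h1; exact absurd h1 (by simp)
  obtain ⟨n, hn0, hnt⟩ := h0
  obtain rfl : n = 0 := by exact_mod_cast hn0.symm
  have := nontrivial_hom_of_ext0 _ _ hnt
  obtain ⟨f, g, hfg⟩ := this
  set φ : ResidueField R →ₗ[R] M := f - g with hφ
  have hφ0 : φ ≠ 0 := sub_ne_zero.mpr hfg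
  refine ⟨φ (residue R 1), ?_, ?_⟩
  · intro hm
    apply hφ0
    ext y
    obtain ⟨r, rfl⟩ := residue_surjective (R := R) y
    have : residue R r = r • residue R 1 := by
      rw [← IsLocalRing.ResidueField.algebraMap_eq, Algebra.smul_def, map_one, mul_one]
    rw [this, map_smul, hm, smul_zero]
    rfl
  · intro a ha
    have hra : residue R a = 0 := Ideal.Quotient.eq_zero_iff_mem.mpr ha
    rw [← map_smul]
    have : (a : R) • residue R (1:R) = residue R a := by
      rw [← IsLocalRing.ResidueField.algebraMap_eq, Algebra.smul_def, map_one, mul_one]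
    rw [this, hra, map_zero]

/-- Let `(R,𝔪)` be a commutative noetherian local ring with `depth R = 0`, and `M` a
finitely generated `R`-module with `depth_R M = 0` such that `Z(End_R M)` is free as an
`R`-module.  Then `Z(End_R M) ≅ R` as `R`-modules. -/
theorem center_end_free_of_depth_zero
    (R : Type) [CommRing R] [IsNoetherianRing R] [IsLocalRing R]
    (M : Type) [AddCommGroup M] [Module R M] [Module.Finite R M]
    (hR : moduleDepth R R = 0) (hM : moduleDepth R M = 0)
    (hfree : Module.Free R (Subalgebra.center R (Module.End R M))) :
    Nonempty ((Subalgebra.center R (Module.End R M)) ≃ₗ[R] R) := by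
  classical
  obtain ⟨x, hx0, hxm⟩ := exists_socle hR
  obtain ⟨m₀, hm₀0, hm₀⟩ := exists_socle hM
  haveI : Nontrivial M := ⟨m₀, 0, hm₀0⟩
  set S := Subalgebra.center R (Module.End R M) with hS
  haveI : IsNoetherian R (Module.End R M) :=
    inferInstanceAs (IsNoetherian R (M →ₗ[R] M))
  haveI : IsNoetherian R ↥S :=
    inferInstanceAs (IsNoetherian R ↥(Subalgebra.toSubmodule S))
  haveI : Module.Finite R ↥S := Module.Finite.of_restrictScalars_finite R R ↥S
  have h1ne : (1 : ↥S) ≠ 0 := by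
    intro h
    apply hm₀0
    have := congrArg (fun s : ↥S => (s : Module.End R M) m₀) h
    simpa using this
  haveI : Nontrivial ↥S := nontrivial_of_ne 1 0 h1ne
  let b := Module.Free.chooseBasis R ↥S
  -- every element of S is congruent to a scalar mod 𝔪S
  have key : ∀ s : ↥S, s ∈ (R ∙ (1 : ↥S)) ⊔ (maximalIdeal R • ⊤ : Submodule R ↥S) := by
    intro s
    obtain ⟨c, hc⟩ := central_scalar ‹Nontrivial M› (s : Module.End R M)
      (fun ψ => Subalgebra.mem_center_iff.mp s.2 ψ)
    set ψ : ↥S := s - c • 1 with hψdef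
    have hψw : ∀ w : M, (∀ a ∈ maximalIdeal R, a • w = 0) → (ψ : Module.End R M) w = 0 := by
      intro w hw
      have : (ψ : Module.End R M) = (s : Module.End R M) - c • 1 := by
        push_cast [hψdef]; rfl
      rw [this]
      simp [LinearMap.sub_apply, hc w hw]
    have hxψ : x • ψ = 0 := by
      apply Subtype.ext
      show x • (ψ : Module.End R M) = 0
      ext u
      have hsoc : ∀ a ∈ maximalIdeal R, a • (x • u) = 0 := by
        intro a ha
        have hax : a * x = 0 := by simpa [smul_eq_mul] using hxm a ha
        rw [smul_smul, hax, zero_smul]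
      have := hψw (x • u) hsoc
      rw [map_smul] at this
      simpa using this
    have hcoef : ∀ i, b.repr ψ i ∈ maximalIdeal R := by
      intro i
      by_contra hi
      have hu : IsUnit (b.repr ψ i) := by
        by_contra hnu
        exact hi (IsLocalRing.mem_maximalIdeal _ |>.mpr hnu)
      have hx' : x * b.repr ψ i = 0 := by
        have := congrArg (fun t => b.repr t i) hxψ
        simpa [map_smul, smul_eq_mul] using this
      obtain ⟨u, hu'⟩ := hu
      apply hx0
      have h2 : x * ((b.repr ψ) i * (↑u⁻¹ : R)) = 0 := by
        rw [← mul_assoc, hx', zero_mul]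
      rw [← hu'] at h2
      simpa using h2
    have hψmem : ψ ∈ (maximalIdeal R • ⊤ : Submodule R ↥S) := by
      have hrepr := b.linearCombination_repr ψ
      rw [← hrepr, Finsupp.linearCombination_apply, Finsupp.sum]
      refine Submodule.sum_mem _ (fun i _ => ?_)
      exact Submodule.smul_mem_smul (hcoef i) Submodule.mem_top
    have hdecomp : s = c • 1 + ψ := by rw [hψdef]; abel
    rw [hdecomp]
    exact Submodule.add_mem _
      (Submodule.mem_sup_left (Submodule.smul_mem _ c (Submodule.mem_span_singleton_self _)))
      (Submodule.mem_sup_right hψmem)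
  -- Nakayama
  have hspan : (R ∙ (1 : ↥S)) = ⊤ := by
    have hjac : maximalIdeal R ≤ Ideal.jacobson ⊥ := by
      rw [IsLocalRing.jacobson_eq_maximalIdeal ⊥ bot_ne_top]
    have := Submodule.le_of_le_smul_of_le_jacobson_bot (N := R ∙ (1 : ↥S))
      (N' := (⊤ : Submodule R ↥S)) Module.Finite.fg_top hjac (fun s _ => key s)
    exact le_antisymm le_top this
  have hsurj : Function.Surjective (LinearMap.toSpanSingleton R ↥S 1) := by
    rw [← LinearMap.range_eq_top, LinearMap.span_singleton_eq_range] at *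
    · exact hspan ▸ (LinearMap.span_singleton_eq_range R ↥S 1) ▸ rfl
  have hrank : Module.rank R ↥S ≤ 1 := by
    have := (LinearMap.toSpanSingleton R ↥S 1).rank_le_of_surjective hsurj
    simpa using this
  have hcard : Cardinal.mk (Module.Free.ChooseBasisIndex R ↥S) ≤ 1 := by
    rw [b.mk_eq_rank'']; exact hrank
  haveI hss : Subsingleton (Module.Free.ChooseBasisIndex R ↥S) :=
    Cardinal.le_one_iff_subsingleton.mp hcard
  haveI : Nonempty (Module.Free.ChooseBasisIndex R ↥S) := b.index_nonempty
  haveI : Unique (Module.Free.ChooseBasisIndex R ↥S) :=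
    { default := Classical.arbitrary _, uniq := fun a => Subsingleton.elim _ _ }
  exact ⟨b.repr.trans (Finsupp.LinearEquiv.finsuppUnique R R _)⟩
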